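/- For any tower (X_n)_{n∈ω} of uniform spaces and any monotone sequence (d_n)_{n∈ω} of uniform pseudometrics (d_n a uniform pseudometric on X_n), the limit lim d_n is a pseudometric on X = ⋃_n X_n that is uniform with respect to the uniformity of the uniform direct limit u-lim X_n; equivalently, for every n the restriction of lim d_n to X_n² is a uniform pseudometric on X_n. -/
import Mathlib


open Set Filter Topology

universe u

/-- A tower of uniform spaces on the ambient set `X`: an increasing sequence
`S 0 ⊆ S 1 ⊆ ⋯` of subsets covering `X`, each `S n` carrying a uniformity which is
the subspace uniformity inherited from `S (n+1)`. -/
structure UniformTower (X : Type u) where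
  S : ℕ → Set X
  mono : Monotone S
  iUnion_eq : ⋃ n, S n = Set.univ
  u : (n : ℕ) → UniformSpace (S n)
  compat : ∀ n, u n = UniformSpace.comap (Set.inclusion (mono (Nat.le_succ n))) (u (n + 1))

namespace UniformTower

variable {X : Type u} (T : UniformTower X)

/-- The uniform direct limit: the strongest (finest) uniformity on `X` making all
the identity inclusions `S n → X` uniformly continuous. -/
noncomputable def dirLim : UniformSpace X :=
  sInf {u' : UniformSpace X |
    ∀ n, @UniformContinuous _ _ (T.u n) u' (Subtype.val : T.S n → X)}

/-- The height `|x| = min {n : x ∈ S n}` of a point of `X`. -/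
noncomputable def height (x : X) : ℕ := sInf {n | x ∈ T.S n}

lemma mem_S_height (x : X) : x ∈ T.S (T.height x) := by
  have hx : x ∈ ⋃ n, T.S n := T.iUnion_eq ▸ Set.mem_univ x
  rcases Set.mem_iUnion.mp hx with ⟨n, hn⟩
  exact Nat.sInf_mem ⟨n, show n ∈ {m | x ∈ T.S m} from hn⟩

/-- Given a sequence of pseudometrics `d n` on the stages `S n`, the distance
`d_{|x,y|}(x,y)` where `|x,y| = max (|x|, |y|)`. -/
noncomputable def chainD (d : (n : ℕ) → T.S n → T.S n → ℝ) (x y : X) : ℝ :=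
  d (max (T.height x) (T.height y))
    ⟨x, T.mono (le_max_left _ _) (T.mem_S_height x)⟩
    ⟨y, T.mono (le_max_right _ _) (T.mem_S_height y)⟩

/-- The limit pseudometric `lim d_n` of a sequence of pseudometrics:
`lim d_n (x,y) = inf { Σ_{i=1}^m d_{|x_{i-1},x_i|}(x_{i-1},x_i) : x = x_0, x_1, …, x_m = y }`. -/
noncomputable def limD (d : (n : ℕ) → T.S n → T.S n → ℝ) (x y : X) : ℝ :=
  sInf {r : ℝ | ∃ (m : ℕ) (c : ℕ → X), c 0 = x ∧ c m = y ∧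
    r = ∑ i ∈ Finset.range m, T.chainD d (c i) (c (i + 1))}

/-- A sequence of pseudometrics on the stages of the tower is monotone if
`d n ≤ d (n+1)` on `S n × S n`. -/
def MonotoneSeq (d : (n : ℕ) → T.S n → T.S n → ℝ) : Prop :=
  ∀ n (x y : T.S n),
    d n x y ≤ d (n + 1) (Set.inclusion (T.mono (Nat.le_succ n)) x)
      (Set.inclusion (T.mono (Nat.le_succ n)) y)

end UniformTower

/-- `d` is a pseudometric: it vanishes on the diagonal, is symmetric and satisfies
the triangle inequality. -/
def IsPseudometric {α : Type*} (d : α → α → ℝ) : Prop :=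
  (∀ x, d x x = 0) ∧ (∀ x y, d x y = d y x) ∧ (∀ x y z, d x z ≤ d x y + d y z)

/-- `d` is a uniform pseudometric on the uniform space `(α, u)`:
for every `ε > 0` the set `{d < ε}` is an entourage. -/
def IsUniformPseudometric {α : Type*} (u : UniformSpace α) (d : α → α → ℝ) : Prop :=
  IsPseudometric d ∧ ∀ ε : ℝ, 0 < ε → {p : α × α | d p.1 p.2 < ε} ∈ @uniformity α u


section Aux

variable {X : Type u} (T : UniformTower X) (d : (n : ℕ) → T.S n → T.S n → ℝ)

private lemma d_congr {m n : ℕ} (h : m = n) {a b : X} (ha : a ∈ T.S m) (hb : b ∈ T.S m)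
    (ha' : a ∈ T.S n) (hb' : b ∈ T.S n) :
    d m ⟨a, ha⟩ ⟨b, hb⟩ = d n ⟨a, ha'⟩ ⟨b, hb'⟩ := by subst h; rfl

private lemma d_nonneg (hd : ∀ n, IsUniformPseudometric (T.u n) (d n)) (n : ℕ) (a b : T.S n) :
    0 ≤ d n a b := by
  obtain ⟨hrefl, hsymm, htri⟩ := (hd n).1
  have h := htri a b a
  rw [hrefl, hsymm b a] at h
  linarith

private lemma d_mono (hmono : T.MonotoneSeq d) {m n : ℕ} (h : m ≤ n) {a b : X}
    (ha : a ∈ T.S m) (hb : b ∈ T.S m) :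
    d m ⟨a, ha⟩ ⟨b, hb⟩ ≤ d n ⟨a, T.mono h ha⟩ ⟨b, T.mono h hb⟩ := by
  induction n, h using Nat.le_induction with
  | base => exact le_refl _
  | succ n hmn ih => exact le_trans ih (hmono n ⟨a, T.mono hmn ha⟩ ⟨b, T.mono hmn hb⟩)

private lemma chainD_nonneg (hd : ∀ n, IsUniformPseudometric (T.u n) (d n)) (x y : X) :
    0 ≤ T.chainD d x y :=
  d_nonneg T d hd _ _ _

private lemma chainD_le (hmono : T.MonotoneSeq d) {n : ℕ} {a b : X}
    (ha : a ∈ T.S n) (hb : b ∈ T.S n) :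
    T.chainD d a b ≤ d n ⟨a, ha⟩ ⟨b, hb⟩ := by
  have hm : max (T.height a) (T.height b) ≤ n :=
    max_le (Nat.sInf_le ha) (Nat.sInf_le hb)
  unfold UniformTower.chainD
  exact d_mono T d hmono hm _ _

private lemma chainD_symm (hd : ∀ n, IsUniformPseudometric (T.u n) (d n)) (x y : X) :
    T.chainD d x y = T.chainD d y x := by
  unfold UniformTower.chainD
  rw [(hd (max (T.height x) (T.height y))).1.2.1]
  exact d_congr T d (max_comm _ _) _ _ _ _

/-- The set of chain sums from `x` to `y`. -/
private def csets (x y : X) : Set ℝ :=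
  {r : ℝ | ∃ (m : ℕ) (c : ℕ → X), c 0 = x ∧ c m = y ∧
    r = ∑ i ∈ Finset.range m, T.chainD d (c i) (c (i + 1))}

private lemma limD_eq (x y : X) : T.limD d x y = sInf (csets T d x y) := rfl

private lemma csets_nonneg (hd : ∀ n, IsUniformPseudometric (T.u n) (d n)) (x y : X) :
    ∀ r ∈ csets T d x y, (0 : ℝ) ≤ r := by
  rintro r ⟨m, c, -, -, rfl⟩
  exact Finset.sum_nonneg fun i _ => chainD_nonneg T d hd _ _

private lemma csets_bddBelow (hd : ∀ n, IsUniformPseudometric (T.u n) (d n)) (x y : X) :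
    BddBelow (csets T d x y) :=
  ⟨0, fun r hr => csets_nonneg T d hd x y r hr⟩

private lemma chainD_mem_csets (x y : X) : T.chainD d x y ∈ csets T d x y := by
  refine ⟨1, fun i => if i = 0 then x else y, by simp, by simp, ?_⟩
  simp [Finset.sum_range_one]

private lemma csets_nonempty (x y : X) : (csets T d x y).Nonempty :=
  ⟨_, chainD_mem_csets T d x y⟩

private lemma csets_rev (hd : ∀ n, IsUniformPseudometric (T.u n) (d n)) {x y : X} {r : ℝ}
    (hr : r ∈ csets T d x y) : r ∈ csets T d y x := by
  obtain ⟨m, c, h0, hm, rfl⟩ := hr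
  refine ⟨m, fun i => c (m - i), by simpa using hm, by simpa using h0, ?_⟩
  rw [← Finset.sum_range_reflect (fun j => T.chainD d (c j) (c (j + 1))) m]
  refine Finset.sum_congr rfl fun j hj => ?_
  have hj' : j < m := Finset.mem_range.mp hj
  have h1 : m - 1 - j + 1 = m - j := by omega
  have h2 : m - (j + 1) = m - 1 - j := by omega
  simp only [h1, h2]
  exact chainD_symm T d hd _ _

private lemma csets_concat (hd : ∀ n, IsUniformPseudometric (T.u n) (d n)) {x y z : X}
    {r1 r2 : ℝ} (h1 : r1 ∈ csets T d x y) (h2 : r2 ∈ csets T d y z) :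
    r1 + r2 ∈ csets T d x z := by
  obtain ⟨m1, c1, h10, h1m, rfl⟩ := h1
  obtain ⟨m2, c2, h20, h2m, rfl⟩ := h2
  set c : ℕ → X := fun i => if i ≤ m1 then c1 i else c2 (i - m1) with hc
  have hcl : ∀ i ≤ m1, c i = c1 i := fun i hi => if_pos hi
  have hcr : ∀ i, c (m1 + i) = c2 i := by
    intro i
    rcases Nat.eq_zero_or_pos i with h | h
    · subst h
      rw [show m1 + 0 = m1 from rfl, hcl m1 le_rfl, h1m, ← h20]
    · have : ¬ (m1 + i ≤ m1) := by omega
      rw [hc]; simp only [this, if_false]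
      congr 1; omega
  refine ⟨m1 + m2, c, by rw [hcl 0 (Nat.zero_le _), h10], by
    rcases Nat.eq_zero_or_pos m2 with h | h
    · subst h; rw [show m1 + 0 = m1 from rfl, hcl m1 le_rfl, h1m, ← h20, h2m]
    · rw [show m1 + m2 = m1 + m2 from rfl, hcr m2, h2m], ?_⟩
  rw [Finset.sum_range_add]
  congr 1
  · refine Finset.sum_congr rfl fun i hi => ?_
    have hi' : i < m1 := Finset.mem_range.mp hi
    rw [hcl i (le_of_lt hi'), hcl (i + 1) hi']
  · refine Finset.sum_congr rfl fun i hi => ?_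
    rw [show m1 + i + 1 = m1 + (i + 1) from rfl, hcr i, hcr (i + 1)]

private lemma limD_nonneg (hd : ∀ n, IsUniformPseudometric (T.u n) (d n)) (x y : X) :
    0 ≤ T.limD d x y :=
  le_csInf (csets_nonempty T d x y) (csets_nonneg T d hd x y)

private lemma limD_refl (hd : ∀ n, IsUniformPseudometric (T.u n) (d n)) (x : X) :
    T.limD d x x = 0 := by
  refine le_antisymm ?_ (limD_nonneg T d hd x x)
  exact csInf_le (csets_bddBelow T d hd x x) ⟨0, fun _ => x, rfl, rfl, by simp⟩

private lemma limD_symm (hd : ∀ n, IsUniformPseudometric (T.u n) (d n)) (x y : X) :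
    T.limD d x y = T.limD d y x := by
  rw [limD_eq, limD_eq]
  congr 1
  exact Set.Subset.antisymm (fun r hr => csets_rev T d hd hr) (fun r hr => csets_rev T d hd hr)

private lemma limD_triangle (hd : ∀ n, IsUniformPseudometric (T.u n) (d n)) (x y z : X) :
    T.limD d x z ≤ T.limD d x y + T.limD d y z := by
  refine le_of_forall_pos_le_add fun ε hε => ?_
  obtain ⟨a, haS, ha⟩ := Real.lt_sInf_add_pos (csets_nonempty T d x y) (half_pos hε)
  obtain ⟨b, hbS, hb⟩ := Real.lt_sInf_add_pos (csets_nonempty T d y z) (half_pos hε)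
  have hab := csInf_le (csets_bddBelow T d hd x z) (csets_concat T d hd haS hbS)
  rw [limD_eq T d x z, limD_eq T d x y, limD_eq T d y z]
  linarith

private lemma limD_le_d (hd : ∀ n, IsUniformPseudometric (T.u n) (d n))
    (hmono : T.MonotoneSeq d) (n : ℕ) (a b : T.S n) :
    T.limD d a.val b.val ≤ d n a b := by
  refine le_trans (csInf_le (csets_bddBelow T d hd _ _) (chainD_mem_csets T d _ _)) ?_
  exact chainD_le T d hmono a.2 b.2

private lemma limD_uniform_on (hd : ∀ n, IsUniformPseudometric (T.u n) (d n))
    (hmono : T.MonotoneSeq d) (n : ℕ) {ε : ℝ} (hε : 0 < ε) :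
    {p : T.S n × T.S n | T.limD d p.1.val p.2.val < ε} ∈ @uniformity _ (T.u n) := by
  refine Filter.mem_of_superset ((hd n).2 ε hε) fun p hp => ?_
  exact lt_of_le_of_lt (limD_le_d T d hd hmono n p.1 p.2) hp

end Aux

/-- For any tower `(X_n)` of uniform spaces and any monotone sequence `(d_n)` of uniform
pseudometrics (`d_n` a uniform pseudometric on `X_n`), the limit `lim d_n` is a pseudometric
on `X = ⋃_n X_n` which is uniform with respect to the uniformity of the uniform direct limit
`u-lim X_n`; equivalently, every restriction of `lim d_n` to `X_n × X_n` is a uniform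
pseudometric on `X_n`. -/
theorem statement7 {X : Type u} (T : UniformTower X)
    (d : (n : ℕ) → T.S n → T.S n → ℝ)
    (hd : ∀ n, IsUniformPseudometric (T.u n) (d n))
    (hmono : T.MonotoneSeq d) :
    IsUniformPseudometric T.dirLim (T.limD d) ∧
      ∀ n, IsUniformPseudometric (T.u n)
        (fun x y : T.S n => T.limD d x.val y.val) := by
  have hrefl : ∀ x, T.limD d x x = 0 := limD_refl T d hd
  have hsymm : ∀ x y, T.limD d x y = T.limD d y x := limD_symm T d hd
  have htri : ∀ x y z, T.limD d x z ≤ T.limD d x y + T.limD d y z := limD_triangle T d hd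
  have hps : IsPseudometric (T.limD d) := ⟨hrefl, hsymm, htri⟩
  have hhalf : ∀ ε > (0 : ℝ), ∃ δ > (0 : ℝ), ∀ x < δ, ∀ y < δ, x + y < ε :=
    fun ε hε => ⟨ε / 2, half_pos hε, fun x hx y hy => by linarith⟩
  refine ⟨⟨hps, ?_⟩, fun n => ⟨⟨fun x => hrefl _, fun x y => hsymm _ _,
    fun x y z => htri _ _ _⟩, fun ε hε => limD_uniform_on T d hd hmono n hε⟩⟩
  intro ε hε
  set U : UniformSpace X := UniformSpace.ofFun (T.limD d) hrefl hsymm htri hhalf with hUdef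
  have hbasis := UniformSpace.hasBasis_ofFun ⟨(1 : ℝ), one_pos⟩ (T.limD d) hrefl hsymm htri hhalf
  have hU : ∀ n, @UniformContinuous _ _ (T.u n) U (Subtype.val : T.S n → X) := by
    intro n
    refine (hbasis.tendsto_right_iff).2 fun δ hδ => ?_
    filter_upwards [limD_uniform_on T d hd hmono n hδ] with p hp using hp
  have hle : T.dirLim ≤ U := by
    unfold UniformTower.dirLim
    exact sInf_le hU
  exact hle (hbasis.mem_of_mem hε)
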